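/- Let X be a nonempty compact Hausdorff space and C a subgroup of the additive group C_ℝ(X) of real-valued continuous functions on X which is dense in the uniform norm and closed under multiplication by rational scalars. Define C⁺ := { h ∈ C : h(x) ≥ ε for all x ∈ X, for some ε > 0 } ∪ {0}. Then (C, C⁺) is a partially ordered abelian group with the strong Riesz interpolation property. -/
import Mathlib


/-- A uniformly dense subgroup of `C(X, ℝ)` closed under rational scalars, with the
cone of functions bounded below by a positive constant (together with `0`), is a
partially ordered abelian group with the strong Riesz interpolation property. -/
theorem dense_subgroup_of_continuous_functions_strong_riesz
    {X : Type*} [TopologicalSpace X] [CompactSpace X] [T2Space X] [Nonempty X]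
    (C : AddSubgroup C(X, ℝ))
    (hdense : Dense (C : Set C(X, ℝ)))
    (hrat : ∀ (q : ℚ), ∀ f ∈ C, (q : ℝ) • f ∈ C) :
    (∀ a ∈ {h : C(X, ℝ) | h ∈ C ∧ (h = 0 ∨ ∃ ε > (0 : ℝ), ∀ x : X, ε ≤ h x)},
      ∀ b ∈ {h : C(X, ℝ) | h ∈ C ∧ (h = 0 ∨ ∃ ε > (0 : ℝ), ∀ x : X, ε ≤ h x)},
        a + b ∈ {h : C(X, ℝ) | h ∈ C ∧ (h = 0 ∨ ∃ ε > (0 : ℝ), ∀ x : X, ε ≤ h x)}) ∧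
    (∀ a : C(X, ℝ),
      a ∈ {h : C(X, ℝ) | h ∈ C ∧ (h = 0 ∨ ∃ ε > (0 : ℝ), ∀ x : X, ε ≤ h x)} →
      -a ∈ {h : C(X, ℝ) | h ∈ C ∧ (h = 0 ∨ ∃ ε > (0 : ℝ), ∀ x : X, ε ≤ h x)} →
      a = 0) ∧
    (∀ f₁ ∈ C, ∀ f₂ ∈ C, ∀ g₁ ∈ C, ∀ g₂ ∈ C,
      (∀ i ∈ ({f₁, f₂} : Set C(X, ℝ)), ∀ j ∈ ({g₁, g₂} : Set C(X, ℝ)),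
        ∃ ε > (0 : ℝ), ∀ x : X, ε ≤ (j - i) x) →
      ∃ h ∈ C, (∀ i ∈ ({f₁, f₂} : Set C(X, ℝ)), ∃ ε > (0 : ℝ), ∀ x : X, ε ≤ (h - i) x) ∧
        (∀ j ∈ ({g₁, g₂} : Set C(X, ℝ)), ∃ ε > (0 : ℝ), ∀ x : X, ε ≤ (j - h) x)) := by
  refine ⟨?_, ?_, ?_⟩
  · rintro a ⟨haC, ha⟩ b ⟨hbC, hb⟩
    refine ⟨C.add_mem haC hbC, ?_⟩
    rcases ha with rfl | ⟨ε, hε, hεa⟩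
    · simpa using hb
    rcases hb with rfl | ⟨δ, hδ, hδb⟩
    · exact Or.inr ⟨ε, hε, by simpa using hεa⟩
    · exact Or.inr ⟨ε + δ, by linarith, fun x => by
        have := hεa x; have := hδb x; simp only [ContinuousMap.add_apply]; linarith⟩
  · rintro a ⟨_, ha⟩ ⟨_, hna⟩
    rcases ha with rfl | ⟨ε, hε, hεa⟩
    · rfl
    rcases hna with h0 | ⟨δ, hδ, hδa⟩
    · simpa using congrArg Neg.neg h0
    · exfalso
      obtain ⟨x⟩ := ‹Nonempty X›
      have := hεa x; have := hδa x
      simp only [ContinuousMap.neg_apply] at *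
      linarith
  · intro f₁ hf₁ f₂ hf₂ g₁ hg₁ g₂ hg₂ hij
    obtain ⟨ε₁, hε₁, h₁⟩ := hij f₁ (by simp) g₁ (by simp)
    obtain ⟨ε₂, hε₂, h₂⟩ := hij f₁ (by simp) g₂ (by simp)
    obtain ⟨ε₃, hε₃, h₃⟩ := hij f₂ (by simp) g₁ (by simp)
    obtain ⟨ε₄, hε₄, h₄⟩ := hij f₂ (by simp) g₂ (by simp)
    set ε := min (min ε₁ ε₂) (min ε₃ ε₄) with hε
    have hεpos : 0 < ε := by positivity
    have key : ∀ i ∈ ({f₁, f₂} : Set C(X, ℝ)), ∀ j ∈ ({g₁, g₂} : Set C(X, ℝ)),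
        ∀ x : X, i x + ε ≤ j x := by
      rintro i (rfl | rfl) j (rfl | rfl) x
      · have : ε ≤ ε₁ := le_trans (min_le_left _ _) (min_le_left _ _)
        have h := h₁ x; simp only [ContinuousMap.sub_apply] at h; linarith
      · have : ε ≤ ε₂ := le_trans (min_le_left _ _) (min_le_right _ _)
        have h := h₂ x; simp only [ContinuousMap.sub_apply] at h; linarith
      · have : ε ≤ ε₃ := le_trans (min_le_right _ _) (min_le_left _ _)
        have h := h₃ x; simp only [ContinuousMap.sub_apply] at h; linarith
      · have : ε ≤ ε₄ := le_trans (min_le_right _ _) (min_le_right _ _)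
        have h := h₄ x; simp only [ContinuousMap.sub_apply] at h; linarith
    set t : C(X, ℝ) := (2⁻¹ : ℝ) • ((f₁ ⊔ f₂) + (g₁ ⊓ g₂)) with ht
    have htlow : ∀ i ∈ ({f₁, f₂} : Set C(X, ℝ)), ∀ x : X, i x + ε / 2 ≤ t x := by
      intro i hi x
      have h1 : i x ≤ max (f₁ x) (f₂ x) := by
        rcases hi with rfl | rfl
        · exact le_max_left _ _
        · exact le_max_right _ _
      have h2 : max (f₁ x) (f₂ x) + ε ≤ min (g₁ x) (g₂ x) := by
        rcases max_cases (f₁ x) (f₂ x) with ⟨hm, _⟩ | ⟨hm, _⟩ <;> rw [hm] <;>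
          exact le_min (key _ (by simp) g₁ (by simp) x) (key _ (by simp) g₂ (by simp) x)
      have : t x = (max (f₁ x) (f₂ x) + min (g₁ x) (g₂ x)) / 2 := by
        simp [ht]; ring
      rw [this]; linarith
    have hthigh : ∀ j ∈ ({g₁, g₂} : Set C(X, ℝ)), ∀ x : X, t x + ε / 2 ≤ j x := by
      intro j hj x
      have h1 : min (g₁ x) (g₂ x) ≤ j x := by
        rcases hj with rfl | rfl
        · exact min_le_left _ _
        · exact min_le_right _ _
      have h2 : max (f₁ x) (f₂ x) + ε ≤ min (g₁ x) (g₂ x) := by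
        rcases max_cases (f₁ x) (f₂ x) with ⟨hm, _⟩ | ⟨hm, _⟩ <;> rw [hm] <;>
          exact le_min (key _ (by simp) g₁ (by simp) x) (key _ (by simp) g₂ (by simp) x)
      have : t x = (max (f₁ x) (f₂ x) + min (g₁ x) (g₂ x)) / 2 := by
        simp [ht]; ring
      rw [this]; linarith
    have := hdense t
    rw [Metric.mem_closure_iff] at this
    obtain ⟨h, hhC, hht⟩ := this (ε / 4) (by positivity)
    have hbound : ∀ x : X, |t x - h x| < ε / 4 := by
      intro x
      calc |t x - h x| = |(t - h) x| := by simp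
        _ ≤ ‖t - h‖ := (t - h).norm_coe_le_norm x
        _ < ε / 4 := by rwa [← dist_eq_norm]
    refine ⟨h, hhC, ?_, ?_⟩
    · intro i hi
      refine ⟨ε / 4, by positivity, fun x => ?_⟩
      have := htlow i hi x
      have := hbound x
      have := abs_lt.mp (hbound x)
      simp only [ContinuousMap.sub_apply]
      linarith [this.1, this.2]
    · intro j hj
      refine ⟨ε / 4, by positivity, fun x => ?_⟩
      have := hthigh j hj x
      have h2 := abs_lt.mp (hbound x)
      simp only [ContinuousMap.sub_apply]
      linarith [h2.1, h2.2]
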